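/- Fix C2 > 0 and let m1 = m2 = 0, so that g(l) = l⁻⁴·(9 + 3·exp(2l²/C2)). There exists a unique l₀ > 0 satisfying (l₀²/C2 − 1)·exp(2·l₀²/C2) = 3, and every global minimizer of g over (0,∞) equals l₀. -/

import Mathlib

open Real

/-- The centered case of the error variance: `g(l) = l⁻⁴ (9 + 3 e^{2l²/C2})`. -/
noncomputable def errVarC2Centered (C2 l : ℝ) : ℝ :=
  (l ^ 4)⁻¹ * (9 + 3 * Real.exp (2 * l ^ 2 / C2))

/-- The auxiliary function `φ(t) = (t-1) e^{2t}`. -/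
noncomputable def phiAux (t : ℝ) : ℝ := (t - 1) * Real.exp (2 * t)

lemma phiAux_hasDeriv (t : ℝ) :
    HasDerivAt phiAux ((2 * t - 1) * Real.exp (2 * t)) t := by
  have h1 : HasDerivAt (fun t : ℝ => t - 1) 1 t := (hasDerivAt_id t).sub_const 1
  have h3 : HasDerivAt (fun t : ℝ => 2 * t) 2 t := by
    simpa using (hasDerivAt_id t).const_mul 2
  have h2 := h3.exp
  have := h1.mul h2
  convert this using 1
  · rfl
  · rfl
  · rfl
  ring

lemma phiAux_strictMonoOn : StrictMonoOn phiAux (Set.Ici 1) := by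
  apply strictMonoOn_of_deriv_pos (convex_Ici 1)
  · exact (Continuous.mul (by continuity) (by continuity)).continuousOn
  · intro t ht
    rw [interior_Ici] at ht
    rw [(phiAux_hasDeriv t).deriv]
    have : (0:ℝ) < 2 * t - 1 := by nlinarith [Set.mem_Ioi.mp ht]
    positivity

lemma phiAux_exists : ∃ t ∈ Set.Icc (1:ℝ) 4, phiAux t = 3 := by
  have hc : ContinuousOn phiAux (Set.Icc 1 4) :=
    (Continuous.mul (by continuity) (by continuity)).continuousOn
  have h := intermediate_value_Icc (by norm_num : (1:ℝ) ≤ 4) hc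
  have h3 : (3:ℝ) ∈ Set.Icc (phiAux 1) (phiAux 4) := by
    constructor
    · simp [phiAux]
    · have : (1:ℝ) ≤ Real.exp (2*4) := Real.one_le_exp (by norm_num)
      simp only [phiAux]
      nlinarith
  obtain ⟨t, ht, hft⟩ := h h3
  exact ⟨t, ht, hft⟩

lemma phiAux_gt_one {t : ℝ} (h : phiAux t = 3) : 1 < t := by
  by_contra hle
  push_neg at hle
  have : phiAux t ≤ 0 := by
    have := Real.exp_pos (2 * t)
    unfold phiAux; nlinarith
  linarith

lemma errVar_hasDeriv (C2 : ℝ) (hC2 : 0 < C2) {a : ℝ} (ha : 0 < a) :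
    HasDerivAt (errVarC2Centered C2)
      (12 * (a ^ 5)⁻¹ * ((a ^ 2 / C2 - 1) * Real.exp (2 * a ^ 2 / C2) - 3)) a := by
  have hne : a ≠ 0 := ne_of_gt ha
  have h1 : HasDerivAt (fun l : ℝ => (l ^ 4)⁻¹)
      (-(4 * a ^ 3) / (a ^ 4) ^ 2) a := by
    exact ((hasDerivAt_pow 4 a).inv (pow_ne_zero 4 hne)).congr_deriv (by norm_num)
  have hin : HasDerivAt (fun l : ℝ => 2 * l ^ 2 / C2) (4 * a / C2) a := by
    have := ((hasDerivAt_pow 2 a).const_mul 2).div_const C2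
    convert this using 1
    · rfl
    · rfl
    norm_num
    ring
  have h2 : HasDerivAt (fun l : ℝ => 9 + 3 * Real.exp (2 * l ^ 2 / C2))
      (3 * (Real.exp (2 * a ^ 2 / C2) * (4 * a / C2))) a :=
    ((hin.exp).const_mul 3).const_add 9
  have := h1.mul h2
  convert this using 1
  have hC2' : C2 ≠ 0 := ne_of_gt hC2
  · rfl
  · rfl
  · rfl
  field_simp
  ring

/-- When `m = 0`, there is a unique `l₀ > 0` with `(l₀²/C2 − 1) e^{2l₀²/C2} = 3`,
and every global minimizer of `g` over `(0,∞)` equals `l₀`. -/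
theorem errVarC2Centered_minimizer (C2 : ℝ) (hC2 : 0 < C2) :
    (∃! l0 : ℝ, 0 < l0 ∧ (l0 ^ 2 / C2 - 1) * Real.exp (2 * l0 ^ 2 / C2) = 3) ∧
    (∀ l0 lstar : ℝ,
      (0 < l0 ∧ (l0 ^ 2 / C2 - 1) * Real.exp (2 * l0 ^ 2 / C2) = 3) →
      0 < lstar →
      (∀ l : ℝ, 0 < l → errVarC2Centered C2 lstar ≤ errVarC2Centered C2 l) →
      lstar = l0) := by
  -- The equation for `l` is `phiAux (l²/C2) = 3`.
  have hphi : ∀ l : ℝ, (l ^ 2 / C2 - 1) * Real.exp (2 * l ^ 2 / C2) = 3 ↔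
      phiAux (l ^ 2 / C2) = 3 := by
    intro l
    unfold phiAux
    rw [mul_div_assoc]
  -- uniqueness of positive solutions
  have huniq : ∀ a b : ℝ, 0 < a → 0 < b →
      (a ^ 2 / C2 - 1) * Real.exp (2 * a ^ 2 / C2) = 3 →
      (b ^ 2 / C2 - 1) * Real.exp (2 * b ^ 2 / C2) = 3 → a = b := by
    intro a b ha hb hea heb
    rw [hphi] at hea heb
    have h1 : a ^ 2 / C2 = b ^ 2 / C2 := by
      apply phiAux_strictMonoOn.injOn
      · exact le_of_lt (phiAux_gt_one hea)
      · exact le_of_lt (phiAux_gt_one heb)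
      · rw [hea, heb]
    field_simp at h1
    exact (pow_left_inj₀ ha.le hb.le two_ne_zero).mp h1
  constructor
  · -- existence and uniqueness
    obtain ⟨t, ht, hft⟩ := phiAux_exists
    have htpos : 0 < t := lt_of_lt_of_le one_pos ht.1
    refine ⟨Real.sqrt (C2 * t), ⟨?_, ?_⟩, ?_⟩
    · exact Real.sqrt_pos.mpr (by positivity)
    · have hsq : Real.sqrt (C2 * t) ^ 2 = C2 * t := Real.sq_sqrt (by positivity)
      rw [hphi, hsq]
      have : C2 * t / C2 = t := by field_simp
      rw [this]; exact hft
    · intro y hy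
      exact huniq y (Real.sqrt (C2 * t)) hy.1 (Real.sqrt_pos.mpr (by positivity)) hy.2
        (by
          have hsq : Real.sqrt (C2 * t) ^ 2 = C2 * t := Real.sq_sqrt (by positivity)
          rw [hphi, hsq]
          have : C2 * t / C2 = t := by field_simp
          rw [this]; exact hft)
  · -- minimizer part
    intro l0 lstar hl0 hls hmin
    -- lstar is a local min
    have hnhds : Set.Ioi (0:ℝ) ∈ nhds lstar := isOpen_Ioi.mem_nhds hls
    have hloc : IsLocalMin (errVarC2Centered C2) lstar :=
      Filter.eventually_of_mem hnhds fun l hl => hmin l hl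
    have hD := errVar_hasDeriv C2 hC2 hls
    have hzero := hloc.hasDerivAt_eq_zero hD
    have hne5 : (lstar ^ 5 : ℝ)⁻¹ ≠ 0 := inv_ne_zero (pow_ne_zero 5 (ne_of_gt hls))
    have heq : (lstar ^ 2 / C2 - 1) * Real.exp (2 * lstar ^ 2 / C2) = 3 := by
      have h12 : (12:ℝ) ≠ 0 := by norm_num
      have := mul_eq_zero.mp hzero
      rcases this with h | h
      · exact absurd (mul_eq_zero.mp h) (by push_neg; exact ⟨h12, hne5⟩)
      · linarith
    exact huniq lstar l0 hls hl0.1 heq hl0.2
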